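/- Let Y = {y_n} ⊂ (0,1) where (y_n) is strictly decreasing to 0 with strictly decreasing gaps, and suppose Y has Minkowski dimension d ∈ [0,1). Let Γ be a family of curves in R^2, where Γ_n is the graph over y ∈ [y_n, 1] of x(y) = (y_n/y)^{1/α} for a fixed α ∈ (0,1). Then the Minkowski dimension of the union ⋃_n Γ_n exists and equals 1 + d. -/

import Mathlib

open Filter MeasureTheory Set Metric
open scoped ENNReal NNReal

namespace SaddleAux

def Gam (y : ℕ → ℝ) (α : ℝ) : Set (ℝ × ℝ) :=
  ⋃ n : ℕ, {p : ℝ × ℝ | p.2 ∈ Icc (y n) 1 ∧ p.1 = (y n / p.2) ^ (1 / α)}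

lemma rpow_sub_le {α m a b : ℝ} (hα1 : α ≤ 1) (hm : 0 < m)
    (ha : m ≤ a) (hab : a ≤ b) : b ^ α - a ^ α ≤ m ^ (α - 1) * (b - a) := by
  have ha0 : 0 < a := hm.trans_le ha
  have hb0 : 0 < b := ha0.trans_le hab
  have h1 : (1:ℝ) ≤ b / a := (one_le_div ha0).2 hab
  have h2 : (b / a) ^ α ≤ b / a := by
    calc (b/a) ^ α ≤ (b/a) ^ (1:ℝ) := Real.rpow_le_rpow_of_exponent_le h1 hα1
    _ = b / a := Real.rpow_one _
  have h3 : b ^ α / a ^ α ≤ b / a := by rwa [← Real.div_rpow hb0.le ha0.le]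
  have hapow : 0 < a ^ α := Real.rpow_pos_of_pos ha0 _
  have h4 : b ^ α ≤ b / a * a ^ α := (div_le_iff₀ hapow).1 h3
  have h5 : b ^ α - a ^ α ≤ (b - a) * (a ^ α / a) := by
    have : b / a * a ^ α - a ^ α = (b - a) * (a ^ α / a) := by
      field_simp
    linarith [h4, this.le]
  have h6 : a ^ (α - 1) ≤ m ^ (α - 1) :=
    Real.rpow_le_rpow_of_nonpos hm ha (by linarith)
  have h7 : a ^ α / a = a ^ (α - 1) := (Real.rpow_sub_one ha0.ne' α).symm
  rw [h7] at h5
  calc b ^ α - a ^ α ≤ (b - a) * a ^ (α - 1) := h5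
    _ ≤ (b - a) * m ^ (α - 1) := by
        apply mul_le_mul_of_nonneg_left h6 (by linarith)
    _ = m ^ (α - 1) * (b - a) := by ring

lemma abs_rpow_sub_rpow_le {α m a b : ℝ} (hα0 : 0 ≤ α) (hα1 : α ≤ 1) (hm : 0 < m)
    (ha : m ≤ a) (hb : m ≤ b) : |a ^ α - b ^ α| ≤ m ^ (α - 1) * |a - b| := by
  rcases le_total a b with h | h
  · rw [abs_sub_comm, abs_of_nonneg (sub_nonneg.2 (Real.rpow_le_rpow (hm.le.trans ha) h hα0)),
      abs_sub_comm, abs_of_nonneg (sub_nonneg.2 h)]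
    exact rpow_sub_le hα1 hm ha h
  · rw [abs_of_nonneg (sub_nonneg.2 (Real.rpow_le_rpow (hm.le.trans hb) h hα0)),
      abs_of_nonneg (sub_nonneg.2 h)]
    exact rpow_sub_le hα1 hm hb h

lemma tendsto_rpow_zero {κ : ℝ} (hκ : 0 < κ) :
    Tendsto (fun δ : ℝ => δ ^ κ) (nhdsWithin 0 (Ioi 0)) (nhds 0) := by
  have h : ContinuousAt (fun x : ℝ => x ^ κ) 0 :=
    Real.continuousAt_rpow_const 0 κ (Or.inr hκ.le)
  have := h.tendsto.mono_left (nhdsWithin_le_nhds (s := Ioi (0:ℝ)))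
  simpa [Real.zero_rpow hκ.ne'] using this

/-- points of `Gam`. -/
lemma Gam_spec {y : ℕ → ℝ} {α : ℝ} (hα : 0 < α) (hpos : ∀ n, 0 < y n)
    {q : ℝ × ℝ} (hq : q ∈ Gam y α) :
    ∃ n, y n ≤ q.2 ∧ q.2 ≤ 1 ∧ 0 < q.1 ∧ q.1 ≤ 1 ∧ q.1 ^ α * q.2 = y n := by
  obtain ⟨n, hn2, hn1⟩ := mem_iUnion.1 hq
  have hq2 : 0 < q.2 := (hpos n).trans_le hn2.1
  have hbase : 0 < y n / q.2 := div_pos (hpos n) hq2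
  have hb1 : y n / q.2 ≤ 1 := (div_le_one hq2).2 hn2.1
  refine ⟨n, hn2.1, hn2.2, ?_, ?_, ?_⟩
  · rw [hn1]; exact Real.rpow_pos_of_pos hbase _
  · rw [hn1]; exact Real.rpow_le_one hbase.le hb1 (by positivity)
  · rw [hn1, one_div, Real.rpow_inv_rpow hbase.le hα.ne']
    field_simp

lemma mem_Gam {y : ℕ → ℝ} {α : ℝ} (hα : 0 < α) (hpos : ∀ n, 0 < y n)
    {n : ℕ} {c : ℝ} (hc0 : 0 < c) (hc1 : c ≤ 1) (hyn : y n ≤ c ^ α) :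
    (c, y n / c ^ α) ∈ Gam y α := by
  have hca : 0 < c ^ α := Real.rpow_pos_of_pos hc0 _
  refine mem_iUnion.2 ⟨n, ?_, ?_⟩
  · constructor
    · rw [le_div_iff₀ hca]
      exact mul_le_of_le_one_right (hpos n).le (Real.rpow_le_one hc0.le hc1 hα.le)
    · exact (div_le_one hca).2 hyn
  · show c = (y n / (y n / c ^ α)) ^ (1/α)
    have h1 : y n / (y n / c ^ α) = c ^ α := by
      rw [div_div_eq_mul_div, mul_comm, mul_div_assoc, div_self (hpos n).ne', mul_one]
    rw [h1, one_div, Real.rpow_rpow_inv hc0.le hα.ne']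

set_option maxHeartbeats 2000000 in
lemma lowerBound (y : ℕ → ℝ) (α : ℝ) (hα : 0 < α) (hα1 : α < 1)
    (hpos : ∀ n, 0 < y n) (hanti : Antitone y)
    (hlim : Tendsto y atTop (nhds 0)) :
    ∃ n₀ : ℕ, ∀ δ : ℝ, 0 < δ → δ < 1 →
      volume (Metric.thickening (δ/2) (Set.range y)) ≤
        2 * volume (Metric.thickening δ (Gam y α)) + (n₀ : ℝ≥0∞) * ENNReal.ofReal δ ∧
      ENNReal.ofReal δ ≤ 2 * volume (Metric.thickening δ (Gam y α)) := by
  have hc : (0:ℝ) < (1/2:ℝ) ^ α := Real.rpow_pos_of_pos (by norm_num) _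
  obtain ⟨n₀, hn₀⟩ := (hlim.eventually (gt_mem_nhds hc)).exists
  refine ⟨n₀, fun δ hδ0 hδ1 => ?_⟩
  set Y₀ : Set ℝ := y '' (Ici n₀) with hY₀
  set T : Set (ℝ × ℝ) := Metric.thickening δ (Gam y α) with hT
  set W : ℝ≥0∞ := volume (Metric.thickening (δ/2) Y₀) with hW
  -- key section inclusion
  have key : ∀ x ∈ Icc (1/2:ℝ) 1,
      (fun t => x ^ α * t) ⁻¹' (Metric.thickening (δ/2) Y₀) ⊆ {t | (x, t) ∈ T} := by
    intro x hx t ht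
    have hx0 : (0:ℝ) < x := lt_of_lt_of_le (by norm_num) hx.1
    have hxa : 0 < x ^ α := Real.rpow_pos_of_pos hx0 _
    obtain ⟨z, hz, hdz⟩ := Metric.mem_thickening_iff.1 ht
    obtain ⟨n, hn, rfl⟩ := hz
    have h1 : (1/2:ℝ) ^ α ≤ x ^ α := Real.rpow_le_rpow (by norm_num) hx.1 hα.le
    have h2 : (1/2:ℝ) ≤ (1/2:ℝ) ^ α := by
      have := Real.rpow_le_rpow_of_exponent_ge (x := (1/2:ℝ)) (by norm_num) (by norm_num) hα1.le
      simpa [Real.rpow_one] using this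
    have hyn : y n ≤ x ^ α := le_trans (le_trans (hanti hn) hn₀.le) h1
    have hmem : (x, y n / x ^ α) ∈ Gam y α := mem_Gam hα hpos hx0 hx.2 hyn
    refine Metric.mem_thickening_iff.2 ⟨(x, y n / x ^ α), hmem, ?_⟩
    rw [Prod.dist_eq]
    have hd2 : dist t (y n / x ^ α) < δ := by
      rw [Real.dist_eq] at hdz ⊢
      have heq : t - y n / x ^ α = (x ^ α * t - y n) / x ^ α := by
        field_simp
      rw [heq, abs_div, abs_of_pos hxa, div_lt_iff₀ hxa]
      have hhalf : (1/2:ℝ) ≤ x ^ α := h2.trans h1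
      calc |x ^ α * t - y n| < δ/2 := hdz
        _ ≤ δ * x ^ α := by nlinarith
    simp only [dist_self]
    exact max_lt hδ0 hd2
  -- Fubini lower bound
  have hmeas : MeasurableSet (T ∩ (Icc (1/2:ℝ) 1 ×ˢ (univ : Set ℝ))) :=
    Metric.isOpen_thickening.measurableSet.inter (measurableSet_Icc.prod MeasurableSet.univ)
  have hWT : W * ENNReal.ofReal (1/2) ≤ volume T := by
    have h1 : volume (T ∩ (Icc (1/2:ℝ) 1 ×ˢ (univ : Set ℝ))) ≤ volume T :=
      measure_mono inter_subset_left
    refine le_trans ?_ h1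
    rw [Measure.volume_eq_prod, Measure.prod_apply hmeas]
    have h2 : ∀ x : ℝ, (Icc (1/2:ℝ) 1).indicator (fun _ => W) x ≤
        volume (Prod.mk x ⁻¹' (T ∩ (Icc (1/2:ℝ) 1 ×ˢ (univ : Set ℝ)))) := by
      intro x
      by_cases hx : x ∈ Icc (1/2:ℝ) 1
      · rw [indicator_of_mem hx]
        have hx0 : (0:ℝ) < x := lt_of_lt_of_le (by norm_num) hx.1
        have hxa : 0 < x ^ α := Real.rpow_pos_of_pos hx0 _
        have hsub : (fun t => x ^ α * t) ⁻¹' (Metric.thickening (δ/2) Y₀) ⊆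
            Prod.mk x ⁻¹' (T ∩ (Icc (1/2:ℝ) 1 ×ˢ (univ : Set ℝ))) := by
          intro t ht
          exact ⟨key x hx ht, hx, trivial⟩
        calc W = 1 * W := (one_mul _).symm
          _ ≤ ENNReal.ofReal |(x ^ α)⁻¹| * W := by
            apply mul_le_mul_left (ENNReal.one_le_ofReal.2 _)
            rw [abs_of_pos (inv_pos.2 hxa)]
            rw [one_le_inv_iff₀]
            exact ⟨hxa, Real.rpow_le_one hx0.le hx.2 hα.le⟩
          _ = volume ((fun t => x ^ α * t) ⁻¹' (Metric.thickening (δ/2) Y₀)) := by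
            rw [Real.volume_preimage_mul_left hxa.ne']
          _ ≤ _ := measure_mono hsub
      · rw [indicator_of_notMem hx]; exact zero_le
    calc W * ENNReal.ofReal (1/2) = W * volume (Icc (1/2:ℝ) 1) := by
          rw [Real.volume_Icc]; norm_num
      _ = ∫⁻ x, (Icc (1/2:ℝ) 1).indicator (fun _ => W) x := by
          rw [lintegral_indicator measurableSet_Icc, setLIntegral_const, mul_comm]
      _ ≤ _ := lintegral_mono h2
  have hW2T : W ≤ 2 * volume T := by
    calc W = W * ENNReal.ofReal (1/2) * 2 := by
          rw [mul_assoc]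
          norm_num
          rw [← ENNReal.ofReal_ofNat 2, ← ENNReal.ofReal_mul (by norm_num)]
          norm_num
      _ ≤ volume T * 2 := mul_le_mul_left hWT _
      _ = 2 * volume T := mul_comm _ _
  have hδW : ENNReal.ofReal δ ≤ W := by
    have hb : ball (y n₀) (δ/2) ⊆ Metric.thickening (δ/2) Y₀ :=
      ball_subset_thickening (mem_image_of_mem y self_mem_Ici) _
    calc ENNReal.ofReal δ = volume (ball (y n₀) (δ/2)) := by
          rw [Real.volume_ball]; congr 1; ring
      _ ≤ W := measure_mono hb
  refine ⟨?_, le_trans hδW hW2T⟩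
  -- covering
  have hcov : Metric.thickening (δ/2) (Set.range y) ⊆
      Metric.thickening (δ/2) Y₀ ∪ ⋃ n ∈ Finset.range n₀, ball (y n) (δ/2) := by
    intro x hx
    obtain ⟨z, ⟨n, rfl⟩, hd⟩ := Metric.mem_thickening_iff.1 hx
    rcases le_or_gt n₀ n with h | h
    · exact Or.inl (Metric.mem_thickening_iff.2 ⟨y n, ⟨n, h, rfl⟩, hd⟩)
    · exact Or.inr (mem_biUnion (Finset.mem_range.2 h) (mem_ball.2 hd))
  calc volume (Metric.thickening (δ/2) (Set.range y)) ≤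
      W + volume (⋃ n ∈ Finset.range n₀, ball (y n) (δ/2)) :=
        le_trans (measure_mono hcov) (measure_union_le _ _)
    _ ≤ W + ∑ n ∈ Finset.range n₀, volume (ball (y n) (δ/2)) :=
        add_le_add_right (measure_biUnion_finset_le _ _) _
    _ = W + (n₀ : ℝ≥0∞) * ENNReal.ofReal δ := by
        congr 1
        have : ∀ n, volume (ball (y n) (δ/2)) = ENNReal.ofReal δ := by
          intro n; rw [Real.volume_ball]; congr 1; ring
        rw [Finset.sum_congr rfl fun n _ => this n, Finset.sum_const, Finset.card_range,
          nsmul_eq_mul]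
    _ ≤ 2 * volume T + (n₀ : ℝ≥0∞) * ENNReal.ofReal δ := add_le_add hW2T le_rfl

set_option maxHeartbeats 2000000 in
lemma upperBound (y : ℕ → ℝ) (α u : ℝ) (hα : 0 < α) (hα1 : α < 1)
    (hpos : ∀ n, 0 < y n) (hu0 : 0 < u) (hu1 : u < 1)
    (r₀ : ℝ) (hr₀ : 0 < r₀)
    (hV1 : ∀ r : ℝ, 0 < r → r < r₀ →
      volume (Metric.thickening r (Set.range y)) ≤ ENNReal.ofReal (r ^ u)) :
    ∃ C : ℝ, 0 < C ∧ ∀ᶠ δ in nhdsWithin (0:ℝ) (Ioi 0),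
      volume (Metric.thickening δ (Gam y α)) ≤ ENNReal.ofReal (C * δ ^ u) := by
  set e : ℝ := (α - 1) * u - α with he_def
  have he1 : e + 1 = (1 - α) * (1 - u) := by ring
  have he1pos : 0 < e + 1 := by rw [he1]; nlinarith
  have he : (-1:ℝ) < e := by linarith
  set C₁ : ℝ := (2:ℝ) ^ (e + 1) / (e + 1) with hC₁_def
  have hC₁ : 0 < C₁ := div_pos (Real.rpow_pos_of_pos two_pos _) he1pos
  have h6u : (0:ℝ) < 6 ^ u := Real.rpow_pos_of_pos (by norm_num) _
  refine ⟨9 + 6 ^ u * C₁, by positivity, ?_⟩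
  have hκ : 0 < 1 + u * (α - 1) := by nlinarith
  have hev2 : ∀ᶠ δ : ℝ in nhdsWithin 0 (Ioi 0),
      6 * 2 ^ (α - 1) * δ ^ (1 + u * (α - 1)) < r₀ := by
    have h2a : (0:ℝ) < 6 * 2 ^ (α - 1) := by positivity
    have := (tendsto_rpow_zero hκ).eventually
      (gt_mem_nhds (show (0:ℝ) < r₀ / (6 * 2 ^ (α - 1)) by positivity))
    filter_upwards [this] with δ hδ
    calc 6 * 2 ^ (α - 1) * δ ^ (1 + u * (α - 1)) <
        6 * 2 ^ (α - 1) * (r₀ / (6 * 2 ^ (α - 1))) := by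
          exact (mul_lt_mul_iff_right₀ h2a).2 hδ
      _ = r₀ := by field_simp
  filter_upwards [Ioo_mem_nhdsGT_of_mem (by norm_num : (0:ℝ) ∈ Ico (0:ℝ) 1), hev2]
    with δ hδ hsmall
  obtain ⟨hδ0, hδ1⟩ := hδ
  set ρ : ℝ := δ ^ u with hρ_def
  have hρ0 : 0 < ρ := Real.rpow_pos_of_pos hδ0 _
  have hρ1 : ρ ≤ 1 := Real.rpow_le_one hδ0.le hδ1.le hu0.le
  have hδρ : δ ≤ ρ := by
    have := Real.rpow_le_rpow_of_exponent_ge hδ0 hδ1.le hu1.le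
    rwa [Real.rpow_one] at this
  -- the radius bound
  have hRbound : ∀ x : ℝ, 2 * ρ ≤ x → 6 * x ^ (α - 1) * δ < r₀ := by
    intro x hx
    have hx0 : 0 < x := lt_of_lt_of_le (by linarith) hx
    have h1 : x ^ (α - 1) ≤ (2 * ρ) ^ (α - 1) :=
      Real.rpow_le_rpow_of_nonpos (by linarith) hx (by linarith)
    have h2 : (2 * ρ) ^ (α - 1) = 2 ^ (α - 1) * ρ ^ (α - 1) :=
      Real.mul_rpow two_pos.le hρ0.le
    have h3 : ρ ^ (α - 1) * δ = δ ^ (1 + u * (α - 1)) := by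
      rw [hρ_def, ← Real.rpow_mul hδ0.le]
      rw [show (1:ℝ) + u * (α - 1) = u * (α - 1) + 1 by ring,
        Real.rpow_add hδ0, Real.rpow_one]
    calc 6 * x ^ (α - 1) * δ ≤ 6 * (2 ^ (α - 1) * ρ ^ (α - 1)) * δ := by
          rw [← h2]
          have : (0:ℝ) ≤ δ := hδ0.le
          nlinarith [h1, hx0]
      _ = 6 * 2 ^ (α - 1) * δ ^ (1 + u * (α - 1)) := by
          rw [← h3]; ring
      _ < r₀ := hsmall
  -- definition of the covering sets
  set A : Set (ℝ × ℝ) := Ioo (-δ) (2 * ρ) ×ˢ Ioo (-1 : ℝ) 2 with hA_def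
  set B : Set (ℝ × ℝ) := (Icc (2 * ρ) 2 ×ˢ (univ : Set ℝ)) ∩
      {p : ℝ × ℝ | Metric.infDist ((max p.1 (2 * ρ)) ^ α * p.2) (Set.range y) <
        6 * (max p.1 (2 * ρ)) ^ (α - 1) * δ} with hB_def
  have hApos : ∀ p ∈ Metric.thickening δ (Gam y α), p ∈ A ∪ B := by
    intro p hp
    obtain ⟨q, hq, hdq⟩ := Metric.mem_thickening_iff.1 hp
    obtain ⟨n, hq2, hq21, hq10, hq11, hqF⟩ := Gam_spec hα hpos hq
    rw [Prod.dist_eq] at hdq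
    obtain ⟨hd1, hd2⟩ := max_lt_iff.1 hdq
    rw [Real.dist_eq] at hd1 hd2
    have habs1 : |p.1 - q.1| < δ := hd1
    have habs2 : |p.2 - q.2| < δ := hd2
    have hp2lt : p.2 < 2 := by
      have := (abs_lt.1 habs2).2; linarith
    have hp2gt : -1 < p.2 := by
      have := (abs_lt.1 habs2).1
      have := hpos n
      linarith
    by_cases hcase : p.1 < 2 * ρ
    · left
      refine ⟨⟨?_, hcase⟩, hp2gt, hp2lt⟩
      have := (abs_lt.1 habs1).1; linarith
    · right
      push_neg at hcase
      have hp1pos : 0 < p.1 := by linarith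
      have hp12 : p.1 ≤ 2 := by
        have := (abs_lt.1 habs1).2; linarith
      have hmax : max p.1 (2 * ρ) = p.1 := max_eq_left hcase
      have hhalf : p.1 / 2 ≤ q.1 := by
        have := (abs_lt.1 habs1).2
        have hδρ' : δ ≤ p.1 / 2 := by linarith
        linarith
      have est1 : |p.1 ^ α - q.1 ^ α| ≤ (p.1/2) ^ (α - 1) * |p.1 - q.1| :=
        abs_rpow_sub_rpow_le hα.le hα1.le (by linarith) (by linarith) hhalf
      -- (p.1/2)^(α-1) ≤ 2 * p.1^(α-1)
      have hps : (p.1/2) ^ (α - 1) ≤ 2 * p.1 ^ (α - 1) := by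
        have h21 : (p.1/2) ^ (α-1) = p.1 ^ (α-1) * (1/2:ℝ) ^ (α-1) := by
          rw [div_eq_mul_inv, Real.mul_rpow hp1pos.le (by norm_num), one_div]
        have h22 : ((1:ℝ)/2) ^ (α-1) = (2:ℝ) ^ (1-α) := by
          rw [one_div, ← Real.rpow_neg_one (2:ℝ)]
          rw [← Real.rpow_mul two_pos.le]
          congr 1; ring
        have h23 : (2:ℝ) ^ (1-α) ≤ 2 := by
          have := Real.rpow_le_rpow_of_exponent_le one_le_two
            (show 1 - α ≤ (1:ℝ) by linarith)
          rwa [Real.rpow_one] at this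
        have hppos : (0:ℝ) ≤ p.1 ^ (α-1) := (Real.rpow_pos_of_pos hp1pos _).le
        rw [h21, h22]
        nlinarith
      have hplow : (1:ℝ)/2 ≤ p.1 ^ (α - 1) := by
        have h31 : (2:ℝ) ^ (α-1) ≤ p.1 ^ (α-1) :=
          Real.rpow_le_rpow_of_nonpos hp1pos hp12 (by linarith)
        have h32 : (2:ℝ) ^ (-1:ℝ) ≤ (2:ℝ) ^ (α-1) :=
          Real.rpow_le_rpow_of_exponent_le one_le_two (by linarith)
        rw [Real.rpow_neg_one] at h32
        have : ((2:ℝ))⁻¹ = 1/2 := by norm_num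
        linarith [h31, h32]
      have hq1a : q.1 ^ α ≤ 1 := Real.rpow_le_one hq10.le hq11 hα.le
      have hq1a0 : 0 < q.1 ^ α := Real.rpow_pos_of_pos hq10 _
      have hFsplit : p.1 ^ α * p.2 - y n =
          (p.1 ^ α - q.1 ^ α) * p.2 + q.1 ^ α * (p.2 - q.2) := by
        rw [← hqF]; ring
      have hppos : (0:ℝ) < p.1 ^ (α-1) := Real.rpow_pos_of_pos hp1pos _
      have hest : |p.1 ^ α * p.2 - y n| < 6 * p.1 ^ (α - 1) * δ := by
        rw [hFsplit]
        have habsp2 : |p.2| ≤ 2 := abs_le.2 ⟨by linarith, hp2lt.le⟩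
        have t1 : |(p.1 ^ α - q.1 ^ α) * p.2| ≤ 4 * p.1 ^ (α-1) * δ := by
          rw [abs_mul]
          have r1 : |p.1 ^ α - q.1 ^ α| ≤ 2 * p.1 ^ (α-1) * δ := by
            calc |p.1 ^ α - q.1 ^ α| ≤ (p.1/2) ^ (α - 1) * |p.1 - q.1| := est1
              _ ≤ (2 * p.1 ^ (α-1)) * δ := by
                  apply mul_le_mul hps habs1.le (abs_nonneg _)
                  positivity
              _ = 2 * p.1 ^ (α-1) * δ := by ring
          calc |p.1 ^ α - q.1 ^ α| * |p.2| ≤ (2 * p.1 ^ (α-1) * δ) * 2 := by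
                apply mul_le_mul r1 habsp2 (abs_nonneg _) (by positivity)
            _ = 4 * p.1 ^ (α-1) * δ := by ring
        have t2 : |q.1 ^ α * (p.2 - q.2)| < 2 * p.1 ^ (α-1) * δ := by
          rw [abs_mul, abs_of_pos hq1a0]
          calc q.1 ^ α * |p.2 - q.2| ≤ 1 * |p.2 - q.2| :=
                mul_le_mul_of_nonneg_right hq1a (abs_nonneg _)
            _ = |p.2 - q.2| := one_mul _
            _ < δ := habs2
            _ ≤ 2 * p.1 ^ (α-1) * δ := by nlinarith
        calc |(p.1 ^ α - q.1 ^ α) * p.2 + q.1 ^ α * (p.2 - q.2)| ≤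
            |(p.1 ^ α - q.1 ^ α) * p.2| + |q.1 ^ α * (p.2 - q.2)| := abs_add_le _ _
          _ < 4 * p.1 ^ (α-1) * δ + 2 * p.1 ^ (α-1) * δ :=
              add_lt_add_of_le_of_lt t1 t2
          _ = 6 * p.1 ^ (α - 1) * δ := by ring
      refine ⟨⟨⟨hcase, hp12⟩, trivial⟩, ?_⟩
      show Metric.infDist ((max p.1 (2 * ρ)) ^ α * p.2) (Set.range y) <
        6 * (max p.1 (2 * ρ)) ^ (α - 1) * δ
      rw [hmax]
      calc Metric.infDist (p.1 ^ α * p.2) (Set.range y) ≤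
          dist (p.1 ^ α * p.2) (y n) := Metric.infDist_le_dist_of_mem (mem_range_self n)
        _ < 6 * p.1 ^ (α - 1) * δ := by rw [Real.dist_eq]; exact hest
  -- measurability of B
  have hmaxpos : ∀ p : ℝ × ℝ, 0 < max p.1 (2 * ρ) := fun p =>
    lt_of_lt_of_le (by linarith) (le_max_right _ _)
  have hgcont : Continuous fun p : ℝ × ℝ => (max p.1 (2 * ρ)) ^ α * p.2 :=
    ((continuous_fst.max continuous_const).rpow_const
      (fun p => Or.inl (hmaxpos p).ne')).mul continuous_snd
  have hfcont : Continuous fun p : ℝ × ℝ =>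
      Metric.infDist ((max p.1 (2 * ρ)) ^ α * p.2) (Set.range y) :=
    (Metric.continuous_infDist_pt (Set.range y)).comp hgcont
  have h2cont : Continuous fun p : ℝ × ℝ => 6 * (max p.1 (2 * ρ)) ^ (α - 1) * δ :=
    (continuous_const.mul ((continuous_fst.max continuous_const).rpow_const
      (fun p => Or.inl (hmaxpos p).ne'))).mul continuous_const
  have hmeasB : MeasurableSet B := by
    rw [hB_def]
    exact (measurableSet_Icc.prod MeasurableSet.univ).inter
      (isOpen_lt hfcont h2cont).measurableSet
  have h2ρ2 : 2 * ρ ≤ 2 := by linarith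
  -- volume of A
  have hvolA : volume A ≤ ENNReal.ofReal (9 * δ ^ u) := by
    rw [hA_def, Measure.volume_eq_prod, Measure.prod_prod, Real.volume_Ioo, Real.volume_Ioo,
      ← ENNReal.ofReal_mul (by linarith)]
    apply ENNReal.ofReal_le_ofReal
    nlinarith
  -- volume of B
  have hvolB : volume B ≤ ENNReal.ofReal (6 ^ u * C₁ * δ ^ u) := by
    rw [Measure.volume_eq_prod, Measure.prod_apply hmeasB]
    have hpoint : ∀ x : ℝ, volume (Prod.mk x ⁻¹' B) ≤
        (Icc (2*ρ) 2).indicator (fun x => ENNReal.ofReal (6^u * δ^u * x ^ e)) x := by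
      intro x
      by_cases hx : x ∈ Icc (2*ρ) 2
      · rw [indicator_of_mem hx]
        have hx0 : 0 < x := lt_of_lt_of_le (by linarith) hx.1
        have hmaxx : max x (2*ρ) = x := max_eq_left hx.1
        have hR0 : 0 < 6 * x ^ (α-1) * δ := by positivity
        have hxa0 : 0 < x ^ α := Real.rpow_pos_of_pos hx0 _
        have hsub2 : Prod.mk x ⁻¹' B ⊆
            (fun t => x ^ α * t) ⁻¹' (Metric.thickening (6 * x ^ (α-1) * δ) (Set.range y)) := by
          intro t ht
          have h := ht.2
          simp only [mem_setOf_eq] at h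
          rw [hmaxx] at h
          exact mem_preimage.2
            ((Metric.mem_thickening_iff_infDist_lt ⟨y 0, mem_range_self 0⟩).2 h)
        calc volume (Prod.mk x ⁻¹' B) ≤
            volume ((fun t => x ^ α * t) ⁻¹'
              (Metric.thickening (6 * x ^ (α-1) * δ) (Set.range y))) := measure_mono hsub2
          _ = ENNReal.ofReal |(x ^ α)⁻¹| *
              volume (Metric.thickening (6 * x ^ (α-1) * δ) (Set.range y)) :=
                Real.volume_preimage_mul_left hxa0.ne' _
          _ ≤ ENNReal.ofReal ((x ^ α)⁻¹) * ENNReal.ofReal ((6 * x ^ (α-1) * δ) ^ u) := by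
              rw [abs_of_pos (inv_pos.2 hxa0)]
              exact mul_le_mul_right (hV1 _ hR0 (hRbound x hx.1)) _
          _ = ENNReal.ofReal ((x ^ α)⁻¹ * (6 * x ^ (α-1) * δ) ^ u) :=
              (ENNReal.ofReal_mul (by positivity)).symm
          _ = ENNReal.ofReal (6^u * δ^u * x ^ e) := by
              congr 1
              have hxev : (x ^ α)⁻¹ = x ^ (-α) := (Real.rpow_neg hx0.le α).symm
              have h1 : (6 * x ^ (α-1) * δ) ^ u = 6^u * (x ^ (α-1)) ^ u * δ ^ u := by
                rw [Real.mul_rpow (by positivity) hδ0.le,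
                  Real.mul_rpow (by norm_num) (Real.rpow_pos_of_pos hx0 _).le]
              have h2 : (x ^ (α-1)) ^ u = x ^ ((α-1) * u) :=
                (Real.rpow_mul hx0.le _ _).symm
              rw [hxev, h1, h2]
              calc x ^ (-α) * (6^u * x ^ ((α-1)*u) * δ^u)
                  = 6^u * δ^u * (x ^ (-α) * x ^ ((α-1)*u)) := by ring
                _ = 6^u * δ^u * x ^ (-α + (α-1)*u) := by
                    rw [← Real.rpow_add hx0]
                _ = 6^u * δ^u * x ^ e := by
                    rw [he_def]; ring_nf
      · rw [indicator_of_notMem hx]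
        have hempty : Prod.mk x ⁻¹' B = ∅ := by
          rw [eq_empty_iff_forall_notMem]
          intro t ht
          exact hx ht.1.1
        rw [hempty]
        simp
    have hint : IntegrableOn (fun x : ℝ => 6^u * δ^u * x ^ e) (Icc (2*ρ) 2) := by
      rw [integrableOn_Icc_iff_integrableOn_Ioc]
      exact ((intervalIntegrable_iff_integrableOn_Ioc_of_le h2ρ2).1
        (intervalIntegral.intervalIntegrable_rpow' he)).const_mul _
    calc ∫⁻ x, volume (Prod.mk x ⁻¹' B) ≤
        ∫⁻ x, (Icc (2*ρ) 2).indicator (fun x => ENNReal.ofReal (6^u * δ^u * x ^ e)) x :=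
          lintegral_mono hpoint
      _ = ∫⁻ x in Icc (2*ρ) 2, ENNReal.ofReal (6^u * δ^u * x ^ e) :=
          lintegral_indicator measurableSet_Icc _
      _ = ENNReal.ofReal (∫ x in Icc (2*ρ) 2, 6^u * δ^u * x ^ e) := by
          rw [ofReal_integral_eq_lintegral_ofReal hint]
          exact (ae_restrict_iff' measurableSet_Icc).2 (Filter.Eventually.of_forall
            fun x hx => by
              have : (0:ℝ) ≤ x := le_trans (by linarith) hx.1
              positivity)
      _ ≤ ENNReal.ofReal (6 ^ u * C₁ * δ ^ u) := by
          apply ENNReal.ofReal_le_ofReal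
          rw [MeasureTheory.integral_const_mul, integral_Icc_eq_integral_Ioc,
            ← intervalIntegral.integral_of_le h2ρ2, integral_rpow (Or.inl he)]
          have h2e : (0:ℝ) ≤ (2*ρ) ^ (e+1) := Real.rpow_nonneg (by linarith) _
          have hle : ((2:ℝ) ^ (e + 1) - (2*ρ) ^ (e + 1)) / (e + 1) ≤ C₁ := by
            rw [hC₁_def]
            gcongr
            linarith
          calc 6^u * δ^u * (((2:ℝ) ^ (e + 1) - (2*ρ) ^ (e + 1)) / (e + 1)) ≤
              6^u * δ^u * C₁ := by
                apply mul_le_mul_of_nonneg_left hle (by positivity)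
            _ = 6 ^ u * C₁ * δ ^ u := by ring
  -- conclusion
  calc volume (Metric.thickening δ (Gam y α)) ≤ volume (A ∪ B) :=
        measure_mono (fun p hp => hApos p hp)
    _ ≤ volume A + volume B := measure_union_le _ _
    _ ≤ ENNReal.ofReal (9 * δ ^ u) + ENNReal.ofReal (6 ^ u * C₁ * δ ^ u) :=
        add_le_add hvolA hvolB
    _ = ENNReal.ofReal (9 * δ ^ u + 6 ^ u * C₁ * δ ^ u) := by
        rw [← ENNReal.ofReal_add (by positivity) (by positivity)]
    _ = ENNReal.ofReal ((9 + 6 ^ u * C₁) * δ ^ u) := by ring_nf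

lemma extract (y : ℕ → ℝ) (d : ℝ) (hpos : ∀ n, 0 < y n) (hlt1 : ∀ n, y n < 1)
    (hdim : Tendsto
      (fun δ : ℝ => 1 - Real.log ((volume (Metric.thickening δ (Set.range y))).toReal) / Real.log δ)
      (nhdsWithin 0 (Ioi 0)) (nhds d))
    {η : ℝ} (hη : 0 < η) :
    ∀ᶠ δ in nhdsWithin (0:ℝ) (Ioi 0),
      volume (Metric.thickening δ (Set.range y)) ≤ ENNReal.ofReal (δ ^ (1 - d - η)) ∧
      ENNReal.ofReal (δ ^ (1 - d + η)) ≤ volume (Metric.thickening δ (Set.range y)) := by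
  have hbdd : Bornology.IsBounded (Set.range y) := by
    apply (Metric.isBounded_Icc (0:ℝ) 1).subset
    rintro _ ⟨n, rfl⟩
    exact ⟨(hpos n).le, (hlt1 n).le⟩
  filter_upwards [Metric.tendsto_nhds.1 hdim η hη,
    Ioo_mem_nhdsGT_of_mem (by norm_num : (0:ℝ) ∈ Ico (0:ℝ) 1)] with δ h1 hδ
  obtain ⟨hδ0, hδ1⟩ := hδ
  set V : ℝ≥0∞ := volume (Metric.thickening δ (Set.range y)) with hV_def
  have hfin : V ≠ ⊤ := (hbdd.thickening.measure_lt_top).ne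
  have hVlb : ENNReal.ofReal (2 * δ) ≤ V :=
    le_trans (le_of_eq (Real.volume_ball (y 0) δ).symm)
      (measure_mono (ball_subset_thickening (mem_range_self 0) δ))
  have hVRpos : 0 < V.toReal := by
    apply ENNReal.toReal_pos _ hfin
    intro h0
    rw [h0] at hVlb
    simp only [nonpos_iff_eq_zero, ENNReal.ofReal_eq_zero] at hVlb
    linarith
  set L : ℝ := Real.log V.toReal with hL_def
  have ht0 : Real.log δ < 0 := Real.log_neg hδ0 hδ1
  rw [Real.dist_eq, abs_lt] at h1
  have hb1 : 1 - d - η < L / Real.log δ := by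
    have := h1.2; simp only [hL_def, hV_def] at this ⊢; linarith
  have hb2 : L / Real.log δ < 1 - d + η := by
    have := h1.1; simp only [hL_def, hV_def] at this ⊢; linarith
  have hup : V.toReal < δ ^ (1 - d - η) := by
    have hL : L < (1 - d - η) * Real.log δ := (lt_div_iff_of_neg ht0).1 hb1
    have : V.toReal < Real.exp ((1 - d - η) * Real.log δ) := by
      calc V.toReal = Real.exp L := (Real.exp_log hVRpos).symm
        _ < _ := Real.exp_lt_exp.2 hL
    rwa [Real.rpow_def_of_pos hδ0, mul_comm]
  have hlo : δ ^ (1 - d + η) < V.toReal := by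
    have hL : (1 - d + η) * Real.log δ < L := (div_lt_iff_of_neg ht0).1 hb2
    have : Real.exp ((1 - d + η) * Real.log δ) < V.toReal := by
      calc Real.exp ((1 - d + η) * Real.log δ) < Real.exp L := Real.exp_lt_exp.2 hL
        _ = V.toReal := Real.exp_log hVRpos
    rwa [Real.rpow_def_of_pos hδ0, mul_comm]
  constructor
  · calc V = ENNReal.ofReal V.toReal := (ENNReal.ofReal_toReal hfin).symm
      _ ≤ ENNReal.ofReal (δ ^ (1 - d - η)) := ENNReal.ofReal_le_ofReal hup.le
  · calc ENNReal.ofReal (δ ^ (1 - d + η)) ≤ ENNReal.ofReal V.toReal :=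
        ENNReal.ofReal_le_ofReal hlo.le
      _ = V := ENNReal.ofReal_toReal hfin

lemma conclude (S : Set (ℝ × ℝ)) (d ε ε₁ : ℝ) (hε₁ : 0 < ε₁) (hεε : ε₁ < ε)
    (hup : ∀ᶠ δ in nhdsWithin (0:ℝ) (Ioi 0),
      volume (Metric.thickening δ S) ≤ ENNReal.ofReal (δ ^ (1 - d - ε₁)))
    (hlo : ∀ᶠ δ in nhdsWithin (0:ℝ) (Ioi 0),
      ENNReal.ofReal (δ ^ (1 - d + ε₁)) ≤ volume (Metric.thickening δ S)) :
    ∀ᶠ δ in nhdsWithin (0:ℝ) (Ioi 0),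
      dist (2 - Real.log ((volume (Metric.thickening δ S)).toReal) / Real.log δ) (1 + d) < ε := by
  filter_upwards [hup, hlo,
    Ioo_mem_nhdsGT_of_mem (by norm_num : (0:ℝ) ∈ Ico (0:ℝ) 1)] with δ h1 h2 hδ
  obtain ⟨hδ0, hδ1⟩ := hδ
  set V : ℝ≥0∞ := volume (Metric.thickening δ S) with hV_def
  have ht0 : Real.log δ < 0 := Real.log_neg hδ0 hδ1
  have hfin : V ≠ ⊤ :=
    (lt_of_le_of_lt h1 ENNReal.ofReal_lt_top).ne
  have hlor : δ ^ (1 - d + ε₁) ≤ V.toReal := (ENNReal.ofReal_le_iff_le_toReal hfin).1 h2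
  have hupr : V.toReal ≤ δ ^ (1 - d - ε₁) :=
    ENNReal.toReal_le_of_le_ofReal (Real.rpow_nonneg hδ0.le _) h1
  have hVRpos : 0 < V.toReal := lt_of_lt_of_le (Real.rpow_pos_of_pos hδ0 _) hlor
  have hlog1 : (1 - d + ε₁) * Real.log δ ≤ Real.log V.toReal := by
    have := Real.log_le_log (Real.rpow_pos_of_pos hδ0 _) hlor
    rwa [Real.log_rpow hδ0] at this
  have hlog2 : Real.log V.toReal ≤ (1 - d - ε₁) * Real.log δ := by
    have := Real.log_le_log hVRpos hupr
    rwa [Real.log_rpow hδ0] at this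
  have hd1 : Real.log V.toReal / Real.log δ ≤ 1 - d + ε₁ :=
    (div_le_iff_of_neg ht0).2 (by linarith)
  have hd2 : 1 - d - ε₁ ≤ Real.log V.toReal / Real.log δ :=
    (le_div_iff_of_neg ht0).2 (by linarith)
  rw [Real.dist_eq]
  have : |2 - Real.log V.toReal / Real.log δ - (1 + d)| ≤ ε₁ := by
    rw [abs_le]; constructor <;> linarith
  exact lt_of_le_of_lt this hεε

end SaddleAux

/-- Minkowski dimension of the union of saddle trajectories `Γ_n` through `(1, y_n)`
for the linear saddle `ẋ = -x`, `ẏ = αy` with `0 < α < 1`: it equals `1 + dim_B {y_n}`. -/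
theorem dim_union_trajectories_linear_saddle (y : ℕ → ℝ) (α d : ℝ)
    (hα : 0 < α) (hα1 : α < 1)
    (hpos : ∀ n, 0 < y n) (hlt1 : ∀ n, y n < 1)
    (hanti : StrictAnti y) (hlim : Tendsto y atTop (nhds 0))
    (hgaps : StrictAnti fun n => y n - y (n + 1))
    (hd0 : 0 ≤ d) (hd1 : d < 1)
    (hdim : Tendsto
      (fun δ : ℝ => 1 - Real.log ((volume (Metric.thickening δ (Set.range y))).toReal) / Real.log δ)
      (nhdsWithin 0 (Ioi 0)) (nhds d)) :
    Tendsto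
      (fun δ : ℝ => 2 - Real.log ((volume (Metric.thickening δ
          (⋃ n : ℕ, {p : ℝ × ℝ | p.2 ∈ Icc (y n) 1 ∧ p.1 = (y n / p.2) ^ (1 / α)}))).toReal)
        / Real.log δ)
      (nhdsWithin 0 (Ioi 0)) (nhds (1 + d)) := by
  have hGam : (⋃ n : ℕ, {p : ℝ × ℝ | p.2 ∈ Icc (y n) 1 ∧ p.1 = (y n / p.2) ^ (1 / α)})
      = SaddleAux.Gam y α := rfl
  rw [hGam, Metric.tendsto_nhds]
  intro ε hε
  -- choice of ε₁
  set ε₁ : ℝ := min ε (min (1 - d) (if d = 0 then 1 else d)) / 2 with hε₁_def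
  have hite : 0 < (if d = 0 then 1 else d) := by
    split_ifs with h
    · norm_num
    · exact lt_of_le_of_ne hd0 (Ne.symm h)
  have hε₁0 : 0 < ε₁ := by
    apply div_pos (lt_min hε (lt_min (by linarith) hite)) two_pos
  have hε₁ε : ε₁ < ε := by
    have h1 : min ε (min (1 - d) (if d = 0 then 1 else d)) ≤ ε := min_le_left _ _
    rw [hε₁_def]; linarith
  have hε₁1d : ε₁ < 1 - d := by
    have h1 : min ε (min (1 - d) (if d = 0 then 1 else d)) ≤ 1 - d :=
      le_trans (min_le_right _ _) (min_le_left _ _)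
    rw [hε₁_def]; linarith
  have hε₁d : d ≠ 0 → ε₁ < d := by
    intro h
    have h1 : min ε (min (1 - d) (if d = 0 then 1 else d)) ≤ d := by
      refine le_trans (min_le_right _ _) (le_trans (min_le_right _ _) ?_)
      rw [if_neg h]
    have hd0' : 0 < d := lt_of_le_of_ne hd0 (Ne.symm h)
    rw [hε₁_def]; linarith
  -- upper bound
  have hexU := SaddleAux.extract y d hpos hlt1 hdim (show 0 < ε₁/2 by linarith)
  obtain ⟨r₀, hr₀mem, hr₀sub⟩ := mem_nhdsGT_iff_exists_Ioo_subset.1 hexU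
  obtain ⟨C, hC0, hCev⟩ := SaddleAux.upperBound y α (1 - d - ε₁/2) hα hα1 hpos
    (by linarith) (by linarith) r₀ hr₀mem
    (fun r hr0 hrr₀ => (hr₀sub ⟨hr0, hrr₀⟩).1)
  have hup : ∀ᶠ δ in nhdsWithin (0:ℝ) (Ioi 0),
      volume (Metric.thickening δ (SaddleAux.Gam y α)) ≤
        ENNReal.ofReal (δ ^ (1 - d - ε₁)) := by
    have hCδ := (SaddleAux.tendsto_rpow_zero (show 0 < ε₁/2 by linarith)).eventually
      (gt_mem_nhds (show (0:ℝ) < 1/C by positivity))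
    filter_upwards [hCev, hCδ,
      Ioo_mem_nhdsGT_of_mem (by norm_num : (0:ℝ) ∈ Ico (0:ℝ) 1)] with δ h1 h2 hδ
    obtain ⟨hδ0, hδ1⟩ := hδ
    refine le_trans h1 (ENNReal.ofReal_le_ofReal ?_)
    have hsplit : δ ^ (1 - d - ε₁/2) = δ ^ (ε₁/2) * δ ^ (1 - d - ε₁) := by
      rw [← Real.rpow_add hδ0]; congr 1; ring
    have hCx : C * δ ^ (ε₁/2) ≤ 1 := by
      have := mul_le_mul_of_nonneg_left h2.le hC0.le
      calc C * δ ^ (ε₁/2) ≤ C * (1/C) := this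
        _ = 1 := by field_simp
    calc C * δ ^ (1 - d - ε₁/2) = (C * δ ^ (ε₁/2)) * δ ^ (1 - d - ε₁) := by
          rw [hsplit]; ring
      _ ≤ 1 * δ ^ (1 - d - ε₁) :=
          mul_le_mul_of_nonneg_right hCx (Real.rpow_nonneg hδ0.le _)
      _ = δ ^ (1 - d - ε₁) := one_mul _
  -- lower bound
  obtain ⟨n₀, hn₀⟩ := SaddleAux.lowerBound y α hα hα1 hpos hanti.antitone hlim
  have hlo : ∀ᶠ δ in nhdsWithin (0:ℝ) (Ioi 0),
      ENNReal.ofReal (δ ^ (1 - d + ε₁)) ≤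
        volume (Metric.thickening δ (SaddleAux.Gam y α)) := by
    by_cases hd : d = 0
    · subst hd
      have hev := (SaddleAux.tendsto_rpow_zero hε₁0).eventually
        (gt_mem_nhds (show (0:ℝ) < 1/2 by norm_num))
      filter_upwards [hev,
        Ioo_mem_nhdsGT_of_mem (by norm_num : (0:ℝ) ∈ Ico (0:ℝ) 1)] with δ h2 hδ
      obtain ⟨hδ0, hδ1⟩ := hδ
      have hmain := (hn₀ δ hδ0 hδ1).2
      have hhalf : ENNReal.ofReal (δ/2) ≤
          volume (Metric.thickening δ (SaddleAux.Gam y α)) := by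
        have h2V : ENNReal.ofReal δ = 2 * ENNReal.ofReal (δ/2) := by
          rw [show (2:ℝ≥0∞) = ENNReal.ofReal 2 by norm_num,
            ← ENNReal.ofReal_mul (by norm_num)]
          congr 1; ring
        rw [h2V] at hmain
        exact (ENNReal.mul_le_mul_iff_right (by norm_num) (by norm_num)).1 hmain
      refine le_trans (ENNReal.ofReal_le_ofReal ?_) hhalf
      have hx : δ ^ (1 - 0 + ε₁) = δ * δ ^ ε₁ := by
        rw [show (1:ℝ) - 0 + ε₁ = 1 + ε₁ by ring, Real.rpow_add hδ0, Real.rpow_one]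
      rw [hx]
      nlinarith [h2.le, hδ0.le]
    · have hd0' : 0 < d := lt_of_le_of_ne hd0 (Ne.symm hd)
      have hε₁d' : ε₁ < d := hε₁d hd
      have hexL := SaddleAux.extract y d hpos hlt1 hdim (show 0 < ε₁/2 by linarith)
      have hhalfmap : Tendsto (fun δ : ℝ => δ/2)
          (nhdsWithin (0:ℝ) (Ioi 0)) (nhdsWithin (0:ℝ) (Ioi 0)) := by
        apply tendsto_nhdsWithin_of_tendsto_nhds_of_eventually_within
        · have h := (continuous_id.div_const (2:ℝ)).tendsto (0:ℝ)
          simp only [id_eq, zero_div] at h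
          exact h.mono_left nhdsWithin_le_nhds
        · filter_upwards [self_mem_nhdsWithin] with x hx
          exact div_pos (show (0:ℝ) < x from hx) (two_pos : (0:ℝ) < 2)
      have hexhalf := hhalfmap.eventually hexL
      have hgtend : Tendsto (fun δ : ℝ => (n₀:ℝ) * δ ^ (d - ε₁/2) + 2 * δ ^ (ε₁/2))
          (nhdsWithin (0:ℝ) (Ioi 0)) (nhds 0) := by
        have h1 := (SaddleAux.tendsto_rpow_zero (show 0 < d - ε₁/2 by linarith)).const_mul (n₀:ℝ)
        have h2 := (SaddleAux.tendsto_rpow_zero (show 0 < ε₁/2 by linarith)).const_mul (2:ℝ)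
        have := h1.add h2
        simpa using this
      have hcs : (0:ℝ) < (2⁻¹:ℝ) ^ (1 - d + ε₁/2) := Real.rpow_pos_of_pos (by norm_num) _
      have hev := hgtend.eventually (gt_mem_nhds hcs)
      filter_upwards [hexhalf, hev,
        Ioo_mem_nhdsGT_of_mem (by norm_num : (0:ℝ) ∈ Ico (0:ℝ) 1)] with δ hex2 hg hδ
      obtain ⟨hδ0, hδ1⟩ := hδ
      have hδs : 0 < δ ^ (1 - d + ε₁/2) := Real.rpow_pos_of_pos hδ0 _
      have hkey : (n₀:ℝ) * δ + 2 * δ ^ (1 - d + ε₁) ≤ (δ/2) ^ (1 - d + ε₁/2) := by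
        have e1 : δ ^ (d - ε₁/2) * δ ^ (1 - d + ε₁/2) = δ := by
          rw [← Real.rpow_add hδ0, show d - ε₁/2 + (1 - d + ε₁/2) = 1 by ring,
            Real.rpow_one]
        have e2 : δ ^ (ε₁/2) * δ ^ (1 - d + ε₁/2) = δ ^ (1 - d + ε₁) := by
          rw [← Real.rpow_add hδ0]; congr 1; ring
        have e3 : (δ/2) ^ (1 - d + ε₁/2) = (2⁻¹:ℝ) ^ (1 - d + ε₁/2) * δ ^ (1 - d + ε₁/2) := by
          rw [div_eq_mul_inv, Real.mul_rpow hδ0.le (by norm_num), mul_comm]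
        calc (n₀:ℝ) * δ + 2 * δ ^ (1 - d + ε₁)
            = ((n₀:ℝ) * δ ^ (d - ε₁/2) + 2 * δ ^ (ε₁/2)) * δ ^ (1 - d + ε₁/2) := by
              rw [add_mul, mul_assoc, mul_assoc, e1, e2]
          _ ≤ (2⁻¹:ℝ) ^ (1 - d + ε₁/2) * δ ^ (1 - d + ε₁/2) :=
              mul_le_mul_of_nonneg_right hg.le hδs.le
          _ = (δ/2) ^ (1 - d + ε₁/2) := e3.symm
      have hmain := (hn₀ δ hδ0 hδ1).1
      have hYlow := hex2.2
      have hnn : ((n₀:ℝ≥0∞)) * ENNReal.ofReal δ = ENNReal.ofReal ((n₀:ℝ) * δ) := by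
        rw [ENNReal.ofReal_mul (Nat.cast_nonneg _), ENNReal.ofReal_natCast]
      have h5 : ENNReal.ofReal ((n₀:ℝ) * δ) + ENNReal.ofReal (2 * δ ^ (1 - d + ε₁)) ≤
          ENNReal.ofReal ((n₀:ℝ) * δ) +
            2 * volume (Metric.thickening δ (SaddleAux.Gam y α)) := by
        rw [← ENNReal.ofReal_add (by positivity) (by positivity)]
        refine le_trans (ENNReal.ofReal_le_ofReal hkey) (le_trans hYlow ?_)
        rw [hnn] at hmain
        calc volume (Metric.thickening (δ/2) (Set.range y)) ≤
            2 * volume (Metric.thickening δ (SaddleAux.Gam y α)) +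
              ENNReal.ofReal ((n₀:ℝ) * δ) := hmain
          _ = _ := add_comm _ _
      have h6 : ENNReal.ofReal (2 * δ ^ (1 - d + ε₁)) ≤
          2 * volume (Metric.thickening δ (SaddleAux.Gam y α)) :=
        (ENNReal.add_le_add_iff_left ENNReal.ofReal_ne_top).1 h5
      have h7 : ENNReal.ofReal (2 * δ ^ (1 - d + ε₁)) =
          2 * ENNReal.ofReal (δ ^ (1 - d + ε₁)) := by
        rw [show (2:ℝ≥0∞) = ENNReal.ofReal 2 by norm_num,
          ← ENNReal.ofReal_mul (by norm_num)]
      rw [h7] at h6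
      exact (ENNReal.mul_le_mul_iff_right (by norm_num) (by norm_num)).1 h6
  exact SaddleAux.conclude (SaddleAux.Gam y α) d ε ε₁ hε₁0 hε₁ε hup hlo
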